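/- The traffic rule F₁₈₄ on Z/nZ is conservative: for every configuration x, the number of 1s in F₁₈₄(x) equals the number of 1s in x. -/
import Mathlib

/-- The traffic rule (elementary CA rule 184) on `ℤ/nℤ`:
`F(x)_i = 1` iff (`x_{i-1} = 1` and `x_i = 0`) or (`x_i = 1` and `x_{i+1} = 1`). -/
def F184 {n : ℕ} (x : ZMod n → Bool) : ZMod n → Bool :=
  fun i => (x (i - 1) && !x i) || (x i && x (i + 1))

/-- rule 184 is conservative: the number of 1s is preserved. -/
theorem F184_conservative (n : ℕ) [NeZero n] (x : ZMod n → Bool) :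
    (Finset.univ.filter (fun i : ZMod n => F184 x i = true)).card =
      (Finset.univ.filter (fun i : ZMod n => x i = true)).card := by
  classical
  simp only [Finset.card_filter]
  have h1 : ∀ i : ZMod n, (if F184 x i = true then 1 else 0) =
      (if (x (i-1) && !x i) = true then 1 else 0) +
      (if (x i && x (i+1)) = true then 1 else 0) := by
    intro i; unfold F184; cases x (i-1) <;> cases x i <;> cases x (i+1) <;> simp
  simp only [h1, Finset.sum_add_distrib]
  have h2 : ∑ i : ZMod n, (if (x (i-1) && !x i) = true then 1 else 0) =
      ∑ i : ZMod n, (if (x i && !x (i+1)) = true then 1 else 0) := by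
    refine Fintype.sum_equiv (Equiv.subRight (1:ZMod n)) _ _ ?_
    intro i; simp
  rw [h2, ← Finset.sum_add_distrib]
  apply Finset.sum_congr rfl
  intro i _
  cases x i <;> cases x (i+1) <;> simp
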